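/- arXiv:2402.01589 — 2 statements merged into one kernel-verified Lean document; each statement's English description precedes it below -/
import Mathlib

section
/- Gluing composition of ipomsets is associative up to the unique isomorphism: for composable ipomsets P, Q, R, (P * Q) * R ≅ P * (Q * R). -/
attribute [local instance] Classical.propDecidable

/-- The three possible states of an event. -/
inductive Tri
  | zero | ex | one

/-- A pre-ipomset: the raw data of a labelled partially ordered multiset
with interfaces over the alphabet `L`. -/
structure PreIpomset (L : Type) where
  car : Type
  lt : car → car → Prop
  eo : car → car → Prop
  lab : car → L
  S : Set car
  T : Set car

/-- `P` is an ipomset: the carrier is finite, `lt` (precedence) and `eo` (event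
order) are strict partial orders whose union is total, the source interface
consists of `lt`-minimal elements and the target interface of `lt`-maximal ones. -/
def IsIpomset {L : Type} (P : PreIpomset L) : Prop :=
  Finite P.car ∧
  (∀ x, ¬ P.lt x x) ∧ (∀ x y z, P.lt x y → P.lt y z → P.lt x z) ∧
  (∀ x, ¬ P.eo x x) ∧ (∀ x y z, P.eo x y → P.eo y z → P.eo x z) ∧
  (∀ x y, x ≠ y → P.lt x y ∨ P.lt y x ∨ P.eo x y ∨ P.eo y x) ∧
  (∀ x ∈ P.S, ∀ y, ¬ P.lt y x) ∧ (∀ x ∈ P.T, ∀ y, ¬ P.lt x y)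

/-- `P` is an interval ipomset: the precedence order is an interval order. -/
def IsInterval {L : Type} (P : PreIpomset L) : Prop :=
  ∀ x y z w, P.lt x z → P.lt y w → P.lt x w ∨ P.lt y z

/-- `P` is discrete: the precedence order is empty. -/
def IsDiscreteIpom {L : Type} (P : PreIpomset L) : Prop := ∀ x y, ¬ P.lt x y

/-- The canonical inclusion of `Q` into the gluing `P * Q` (whose carrier is
modelled as `P.car ⊕ {q : Q.car // q ∉ Q.S}`): elements of `S_Q` are identified
with elements of `T_P` via the interface isomorphism `f`. -/
noncomputable def iotaQ {L : Type} (P Q : PreIpomset L)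
    (f : {x : P.car // x ∈ P.T} ≃ {y : Q.car // y ∈ Q.S}) :
    Q.car → P.car ⊕ {q : Q.car // q ∉ Q.S} :=
  fun q => if h : q ∈ Q.S then Sum.inl (f.symm ⟨q, h⟩).1 else Sum.inr ⟨q, h⟩

/-- The gluing composition `P * Q` of pre-ipomsets along the interface
isomorphism `f : T_P ≃ S_Q`.  The precedence order is
`<_P ∪ <_Q ∪ (P ∖ T_P) × (Q ∖ S_Q)`, the event order is the transitive closure
of `⇢_P ∪ ⇢_Q`, the source interface is `S_P` and the target interface `T_Q`. -/
noncomputable def glue {L : Type} (P Q : PreIpomset L)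
    (f : {x : P.car // x ∈ P.T} ≃ {y : Q.car // y ∈ Q.S}) : PreIpomset L where
  car := P.car ⊕ {q : Q.car // q ∉ Q.S}
  lt := fun x y =>
    (∃ a b, x = Sum.inl a ∧ y = Sum.inl b ∧ P.lt a b) ∨
    (∃ a b, x = iotaQ P Q f a ∧ y = iotaQ P Q f b ∧ Q.lt a b) ∨
    (∃ a b, x = Sum.inl a ∧ y = iotaQ P Q f b ∧ a ∉ P.T ∧ b ∉ Q.S)
  eo := Relation.TransGen (fun x y =>
    (∃ a b, x = Sum.inl a ∧ y = Sum.inl b ∧ P.eo a b) ∨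
    (∃ a b, x = iotaQ P Q f a ∧ y = iotaQ P Q f b ∧ Q.eo a b))
  lab := fun x => match x with
    | Sum.inl a => P.lab a
    | Sum.inr q => Q.lab q.1
  S := Sum.inl '' P.S
  T := (iotaQ P Q f) '' Q.T

/-- The interface isomorphism `f : T_P ≃ S_Q` is a conclist isomorphism:
it preserves the event order and the labels. -/
def GlueOK {L : Type} (P Q : PreIpomset L)
    (f : {x : P.car // x ∈ P.T} ≃ {y : Q.car // y ∈ Q.S}) : Prop :=
  (∀ a b : {x : P.car // x ∈ P.T}, P.eo a.1 b.1 ↔ Q.eo (f a).1 (f b).1) ∧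
  (∀ a : {x : P.car // x ∈ P.T}, Q.lab (f a).1 = P.lab a.1)

/-- Isomorphism of pre-ipomsets: a bijection preserving precedence, event order,
labels and both interfaces. -/
def IpomIso {L : Type} (A B : PreIpomset L) : Prop :=
  ∃ e : A.car ≃ B.car,
    (∀ x y, A.lt x y ↔ B.lt (e x) (e y)) ∧
    (∀ x y, A.eo x y ↔ B.eo (e x) (e y)) ∧
    (∀ x, B.lab (e x) = A.lab x) ∧
    (e '' A.S = B.S) ∧ (e '' A.T = B.T)

section AuxLemmas

variable {L : Type} {P Q : PreIpomset L} (f : {x : P.car // x ∈ P.T} ≃ {y : Q.car // y ∈ Q.S})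

lemma iotaQ_pos {q : Q.car} (hq : q ∈ Q.S) :
    iotaQ P Q f q = Sum.inl (f.symm ⟨q, hq⟩).1 := dif_pos hq

lemma iotaQ_neg {q : Q.car} (hq : q ∉ Q.S) :
    iotaQ P Q f q = Sum.inr ⟨q, hq⟩ := dif_neg hq

lemma iotaQ_inj : Function.Injective (iotaQ P Q f) := by
  intro a b h
  by_cases h1 : a ∈ Q.S <;> by_cases h2 : b ∈ Q.S
  · rw [iotaQ_pos f h1, iotaQ_pos f h2] at h
    have h3 : (f.symm ⟨a, h1⟩).1 = (f.symm ⟨b, h2⟩).1 := Sum.inl.inj h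
    have h4 : (⟨a, h1⟩ : {y : Q.car // y ∈ Q.S}) = ⟨b, h2⟩ :=
      f.symm.injective (Subtype.ext h3)
    exact congrArg Subtype.val h4
  · rw [iotaQ_pos f h1, iotaQ_neg f h2] at h; exact (Sum.inl_ne_inr h).elim
  · rw [iotaQ_neg f h1, iotaQ_pos f h2] at h; exact (Sum.inr_ne_inl h).elim
  · rw [iotaQ_neg f h1, iotaQ_neg f h2] at h
    exact congrArg Subtype.val (Sum.inr.inj h)

lemma mem_glueT {q : Q.car} (hq : q ∈ Q.T) : iotaQ P Q f q ∈ (glue P Q f).T :=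
  ⟨q, hq, rfl⟩

lemma not_mem_glueT_iff (a : (glue P Q f).car) :
    a ∉ (glue P Q f).T ↔
      ((∃ p, a = Sum.inl p ∧ p ∉ P.T) ∨ (∃ q, a = iotaQ P Q f q ∧ q ∉ Q.T)) := by
  constructor
  · intro h
    rcases a with p | q
    · by_cases hp : p ∈ P.T
      · right
        have hEq : iotaQ P Q f (f ⟨p, hp⟩).1 = Sum.inl p := by
          rw [iotaQ_pos f (f ⟨p, hp⟩).2]; simp
        exact ⟨(f ⟨p, hp⟩).1, hEq.symm, fun hT => h (hEq ▸ mem_glueT f hT)⟩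
      · exact Or.inl ⟨p, rfl, hp⟩
    · right
      refine ⟨q.1, (iotaQ_neg f q.2).symm, fun hT => h ?_⟩
      rw [← iotaQ_neg f q.2]
      exact mem_glueT f hT
  · rintro (⟨p, rfl, hp⟩ | ⟨q, rfl, hq⟩) ⟨t, ht, hEq⟩
    · by_cases hts : t ∈ Q.S
      · rw [iotaQ_pos f hts] at hEq
        exact hp (Sum.inl.inj hEq ▸ (f.symm ⟨t, hts⟩).2)
      · rw [iotaQ_neg f hts] at hEq
        exact Sum.inr_ne_inl hEq
    · exact hq (iotaQ_inj f hEq ▸ ht)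

end AuxLemmas

section TransGenAux

lemma transGen_map_image {α β : Type*} (m : α → β) (r : α → α → Prop) {a b : α}
    (h : Relation.TransGen r a b) :
    Relation.TransGen (fun x y => ∃ u v, x = m u ∧ y = m v ∧ r u v) (m a) (m b) :=
  Relation.TransGen.lift m (fun u v hr => ⟨u, v, rfl, rfl, hr⟩) _ _ h

lemma transGen_congr {α : Type*} {r s : α → α → Prop} (h : ∀ x y, r x y ↔ s x y) {x y : α} :
    Relation.TransGen r x y ↔ Relation.TransGen s x y :=
  ⟨fun hx => Relation.TransGen.mono (fun a b => (h a b).1) _ _ hx,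
   fun hx => Relation.TransGen.mono (fun a b => (h a b).2) _ _ hx⟩

lemma transGen_absorb {α β : Type*} (m : α → β) (r : α → α → Prop) (A : β → β → Prop) {x y : β} :
    Relation.TransGen (fun x y => (∃ u v, x = m u ∧ y = m v ∧ Relation.TransGen r u v) ∨ A x y) x y ↔
    Relation.TransGen (fun x y => (∃ u v, x = m u ∧ y = m v ∧ r u v) ∨ A x y) x y := by
  constructor
  · intro h
    induction h with
    | single h =>
      rcases h with ⟨u, v, rfl, rfl, hr⟩ | hA
      · exact Relation.TransGen.mono (fun a b h' => Or.inl h') _ _ (transGen_map_image m r hr)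
      · exact Relation.TransGen.single (Or.inr hA)
    | tail _ hstep ih =>
      rcases hstep with ⟨u, v, rfl, rfl, hr⟩ | hA
      · exact ih.trans (Relation.TransGen.mono (fun a b h' => Or.inl h') _ _ (transGen_map_image m r hr))
      · exact ih.tail (Or.inr hA)
  · intro h
    exact Relation.TransGen.mono
      (fun a b h' => h'.imp (fun ⟨u, v, hu, hv, hr⟩ => ⟨u, v, hu, hv, Relation.TransGen.single hr⟩) id) _ _ h

lemma transGen_equiv {α β : Type*} (e : α ≃ β) {r : α → α → Prop} {s : β → β → Prop}
    (h : ∀ x y, r x y ↔ s (e x) (e y)) {x y : α} :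
    Relation.TransGen r x y ↔ Relation.TransGen s (e x) (e y) := by
  constructor
  · exact fun hx => Relation.TransGen.lift e (fun a b hab => (h a b).1 hab) _ _ hx
  · intro hs
    have := Relation.TransGen.lift e.symm
      (fun a b (hab : s a b) => (h (e.symm a) (e.symm b)).2 (by simpa using hab)) _ _ hs
    simpa [Function.onFun] using this

end TransGenAux
section AssocDefs

variable {L : Type} (P Q R : PreIpomset L)
  (f : {x : P.car // x ∈ P.T} ≃ {y : Q.car // y ∈ Q.S})
  (g : {x : Q.car // x ∈ Q.T} ≃ {y : R.car // y ∈ R.S})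
  (g' : {x : (glue P Q f).car // x ∈ (glue P Q f).T} ≃ {y : R.car // y ∈ R.S})
  (f' : {x : P.car // x ∈ P.T} ≃ {y : (glue Q R g).car // y ∈ (glue Q R g).S})

lemma inl_not_mem_glueS {q : Q.car} (hq : q ∉ Q.S) :
    (Sum.inl q : (glue Q R g).car) ∉ (glue Q R g).S := by
  rintro ⟨a, ha, hEq⟩
  exact hq (Sum.inl.inj hEq ▸ ha)

lemma inr_not_mem_glueS (r : {r : R.car // r ∉ R.S}) :
    (Sum.inr r : (glue Q R g).car) ∉ (glue Q R g).S := by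
  rintro ⟨a, ha, hEq⟩
  exact Sum.inl_ne_inr hEq

noncomputable def assocEquiv : (glue (glue P Q f) R g').car ≃ (glue P (glue Q R g) f').car where
  toFun x := match x with
    | Sum.inl (Sum.inl p) => Sum.inl p
    | Sum.inl (Sum.inr q) => Sum.inr ⟨Sum.inl q.1, inl_not_mem_glueS Q R g q.2⟩
    | Sum.inr r => Sum.inr ⟨Sum.inr r, inr_not_mem_glueS Q R g r⟩
  invFun x := match x with
    | Sum.inl p => Sum.inl (Sum.inl p)
    | Sum.inr ⟨Sum.inl q, h⟩ => Sum.inl (Sum.inr ⟨q, fun hq => h ⟨q, hq, rfl⟩⟩)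
    | Sum.inr ⟨Sum.inr r, _⟩ => Sum.inr r
  left_inv := by rintro ((p | q) | r) <;> rfl
  right_inv := by rintro (p | ⟨(q | r), h⟩) <;> rfl

/-- the common three-part precedence relation -/
def midLt : (glue (glue P Q f) R g').car → (glue (glue P Q f) R g').car → Prop := fun x y =>
  (∃ p p', x = Sum.inl (Sum.inl p) ∧ y = Sum.inl (Sum.inl p') ∧ P.lt p p') ∨
  (∃ q q', x = Sum.inl (iotaQ P Q f q) ∧ y = Sum.inl (iotaQ P Q f q') ∧ Q.lt q q') ∨
  (∃ r r', x = iotaQ (glue P Q f) R g' r ∧ y = iotaQ (glue P Q f) R g' r' ∧ R.lt r r') ∨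
  (∃ p q, x = Sum.inl (Sum.inl p) ∧ y = Sum.inl (iotaQ P Q f q) ∧ p ∉ P.T ∧ q ∉ Q.S) ∨
  (∃ p r, x = Sum.inl (Sum.inl p) ∧ y = iotaQ (glue P Q f) R g' r ∧ p ∉ P.T ∧ r ∉ R.S) ∨
  (∃ q r, x = Sum.inl (iotaQ P Q f q) ∧ y = iotaQ (glue P Q f) R g' r ∧ q ∉ Q.T ∧ r ∉ R.S)

/-- the common event-order step relation -/
def midStep : (glue (glue P Q f) R g').car → (glue (glue P Q f) R g').car → Prop := fun x y =>
  (∃ p p', x = Sum.inl (Sum.inl p) ∧ y = Sum.inl (Sum.inl p') ∧ P.eo p p') ∨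
  (∃ q q', x = Sum.inl (iotaQ P Q f q) ∧ y = Sum.inl (iotaQ P Q f q') ∧ Q.eo q q') ∨
  (∃ r r', x = iotaQ (glue P Q f) R g' r ∧ y = iotaQ (glue P Q f) R g' r' ∧ R.eo r r')

end AssocDefs
section AssocComm

variable {L : Type} (P Q R : PreIpomset L)
  (f : {x : P.car // x ∈ P.T} ≃ {y : Q.car // y ∈ Q.S})
  (g : {x : Q.car // x ∈ Q.T} ≃ {y : R.car // y ∈ R.S})
  (g' : {x : (glue P Q f).car // x ∈ (glue P Q f).T} ≃ {y : R.car // y ∈ R.S})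
  (f' : {x : P.car // x ∈ P.T} ≃ {y : (glue Q R g).car // y ∈ (glue Q R g).S})

lemma assocEquiv_inl (p : P.car) :
    assocEquiv P Q R f g g' f' (Sum.inl (Sum.inl p)) = Sum.inl p := rfl

lemma assocEquiv_iota2
    (hf' : ∀ p : {x : P.car // x ∈ P.T}, (f' p).1 = Sum.inl (f p).1) (q : Q.car) :
    assocEquiv P Q R f g g' f' (Sum.inl (iotaQ P Q f q)) =
      iotaQ P (glue Q R g) f' (Sum.inl q) := by
  by_cases hq : q ∈ Q.S
  · have hmem : (Sum.inl q : (glue Q R g).car) ∈ (glue Q R g).S := ⟨q, hq, rfl⟩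
    rw [iotaQ_pos f hq, iotaQ_pos f' hmem]
    have key : f' (f.symm ⟨q, hq⟩) = ⟨Sum.inl q, hmem⟩ := by
      apply Subtype.ext
      rw [hf']
      simp
      rfl
    have keysymm : f'.symm ⟨Sum.inl q, hmem⟩ = f.symm ⟨q, hq⟩ := by
      rw [Equiv.symm_apply_eq]; exact key.symm
    rw [keysymm]
    rfl
  · rw [iotaQ_neg f hq, iotaQ_neg f' (inl_not_mem_glueS Q R g hq)]
    rfl

lemma assocEquiv_iota3
    (hg' : ∀ (t : {x : Q.car // x ∈ Q.T}) (ht : iotaQ P Q f t.1 ∈ (glue P Q f).T),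
      (g' ⟨iotaQ P Q f t.1, ht⟩).1 = (g t).1)
    (hf' : ∀ p : {x : P.car // x ∈ P.T}, (f' p).1 = Sum.inl (f p).1) (r : R.car) :
    assocEquiv P Q R f g g' f' (iotaQ (glue P Q f) R g' r) =
      iotaQ P (glue Q R g) f' (iotaQ Q R g r) := by
  by_cases hr : r ∈ R.S
  · rw [iotaQ_pos g' hr, iotaQ_pos g hr]
    have ht : iotaQ P Q f (g.symm ⟨r, hr⟩).1 ∈ (glue P Q f).T :=
      mem_glueT f (g.symm ⟨r, hr⟩).2
    have key : g' ⟨iotaQ P Q f (g.symm ⟨r, hr⟩).1, ht⟩ = ⟨r, hr⟩ := by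
      apply Subtype.ext
      rw [hg' (g.symm ⟨r, hr⟩) ht]
      simp
    have keysymm : g'.symm ⟨r, hr⟩ = ⟨iotaQ P Q f (g.symm ⟨r, hr⟩).1, ht⟩ := by
      rw [Equiv.symm_apply_eq]; exact key.symm
    rw [keysymm]
    exact assocEquiv_iota2 P Q R f g g' f' hf' (g.symm ⟨r, hr⟩).1
  · rw [iotaQ_neg g' hr, iotaQ_neg g hr,
      iotaQ_neg f' (inr_not_mem_glueS Q R g ⟨r, hr⟩)]
    rfl

end AssocComm
section AssocLt

variable {L : Type} (P Q R : PreIpomset L)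
  (f : {x : P.car // x ∈ P.T} ≃ {y : Q.car // y ∈ Q.S})
  (g : {x : Q.car // x ∈ Q.T} ≃ {y : R.car // y ∈ R.S})
  (g' : {x : (glue P Q f).car // x ∈ (glue P Q f).T} ≃ {y : R.car // y ∈ R.S})
  (f' : {x : P.car // x ∈ P.T} ≃ {y : (glue Q R g).car // y ∈ (glue Q R g).S})

lemma glue_lt_def (x y : (glue P Q f).car) :
    (glue P Q f).lt x y ↔
      ((∃ a b, x = Sum.inl a ∧ y = Sum.inl b ∧ P.lt a b) ∨
       (∃ a b, x = iotaQ P Q f a ∧ y = iotaQ P Q f b ∧ Q.lt a b) ∨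
       (∃ a b, x = Sum.inl a ∧ y = iotaQ P Q f b ∧ a ∉ P.T ∧ b ∉ Q.S)) := Iff.rfl

lemma lhs_lt_iff (x y : (glue (glue P Q f) R g').car) :
    (glue (glue P Q f) R g').lt x y ↔ midLt P Q R f g' x y := by
  constructor
  · intro h
    rcases (glue_lt_def (glue P Q f) R g' x y).1 h with
      ⟨a, b, rfl, rfl, hab⟩ | ⟨r, r', rfl, rfl, hrr⟩ | ⟨a, b, rfl, rfl, ha, hb⟩
    · rcases (glue_lt_def P Q f a b).1 hab with
        ⟨p, p', rfl, rfl, h1⟩ | ⟨q, q', rfl, rfl, h1⟩ | ⟨p, q, rfl, rfl, hp, hq⟩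
      · exact Or.inl ⟨p, p', rfl, rfl, h1⟩
      · exact Or.inr (Or.inl ⟨q, q', rfl, rfl, h1⟩)
      · exact Or.inr (Or.inr (Or.inr (Or.inl ⟨p, q, rfl, rfl, hp, hq⟩)))
    · exact Or.inr (Or.inr (Or.inl ⟨r, r', rfl, rfl, hrr⟩))
    · rcases (not_mem_glueT_iff f a).1 ha with ⟨p, rfl, hp⟩ | ⟨q, rfl, hq⟩
      · exact Or.inr (Or.inr (Or.inr (Or.inr (Or.inl ⟨p, b, rfl, rfl, hp, hb⟩))))
      · exact Or.inr (Or.inr (Or.inr (Or.inr (Or.inr ⟨q, b, rfl, rfl, hq, hb⟩))))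
  · intro h
    rcases h with ⟨p, p', rfl, rfl, h1⟩ | ⟨q, q', rfl, rfl, h1⟩ | ⟨r, r', rfl, rfl, h1⟩ |
      ⟨p, q, rfl, rfl, hp, hq⟩ | ⟨p, r, rfl, rfl, hp, hr⟩ | ⟨q, r, rfl, rfl, hq, hr⟩
    · exact Or.inl ⟨Sum.inl p, Sum.inl p', rfl, rfl, Or.inl ⟨p, p', rfl, rfl, h1⟩⟩
    · exact Or.inl ⟨iotaQ P Q f q, iotaQ P Q f q', rfl, rfl,
        Or.inr (Or.inl ⟨q, q', rfl, rfl, h1⟩)⟩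
    · exact Or.inr (Or.inl ⟨r, r', rfl, rfl, h1⟩)
    · exact Or.inl ⟨Sum.inl p, iotaQ P Q f q, rfl, rfl,
        Or.inr (Or.inr ⟨p, q, rfl, rfl, hp, hq⟩)⟩
    · exact Or.inr (Or.inr ⟨Sum.inl p, r, rfl, rfl,
        (not_mem_glueT_iff f _).2 (Or.inl ⟨p, rfl, hp⟩), hr⟩)
    · exact Or.inr (Or.inr ⟨iotaQ P Q f q, r, rfl, rfl,
        (not_mem_glueT_iff f _).2 (Or.inr ⟨q, rfl, hq⟩), hr⟩)

lemma rhs_lt_iff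
    (hg' : ∀ (t : {x : Q.car // x ∈ Q.T}) (ht : iotaQ P Q f t.1 ∈ (glue P Q f).T),
      (g' ⟨iotaQ P Q f t.1, ht⟩).1 = (g t).1)
    (hf' : ∀ p : {x : P.car // x ∈ P.T}, (f' p).1 = Sum.inl (f p).1)
    (x y : (glue (glue P Q f) R g').car) :
    (glue P (glue Q R g) f').lt (assocEquiv P Q R f g g' f' x) (assocEquiv P Q R f g g' f' y) ↔
      midLt P Q R f g' x y := by
  set e := assocEquiv P Q R f g g' f' with he
  have einj := (assocEquiv P Q R f g g' f').injective
  have e1 : ∀ p, e (Sum.inl (Sum.inl p)) = Sum.inl p := assocEquiv_inl P Q R f g g' f'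
  have e2 : ∀ q, e (Sum.inl (iotaQ P Q f q)) = iotaQ P (glue Q R g) f' (Sum.inl q) :=
    assocEquiv_iota2 P Q R f g g' f' hf'
  have e3 : ∀ r, e (iotaQ (glue P Q f) R g' r) = iotaQ P (glue Q R g) f' (iotaQ Q R g r) :=
    assocEquiv_iota3 P Q R f g g' f' hg' hf'
  constructor
  · intro h
    rcases (glue_lt_def P (glue Q R g) f' _ _).1 h with
      ⟨p, p', hx, hy, h1⟩ | ⟨b, b', hx, hy, hB⟩ | ⟨p, b, hx, hy, hp, hb⟩
    · have hx' : x = Sum.inl (Sum.inl p) := einj (hx.trans (e1 p).symm)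
      have hy' : y = Sum.inl (Sum.inl p') := einj (hy.trans (e1 p').symm)
      exact Or.inl ⟨p, p', hx', hy', h1⟩
    · rcases (glue_lt_def Q R g b b').1 hB with
        ⟨q, q', rfl, rfl, h1⟩ | ⟨r, r', hb, hb', h1⟩ | ⟨q, r, rfl, hb', hq, hr⟩
      · have hx' : x = Sum.inl (iotaQ P Q f q) := einj (hx.trans (e2 q).symm)
        have hy' : y = Sum.inl (iotaQ P Q f q') := einj (hy.trans (e2 q').symm)
        exact Or.inr (Or.inl ⟨q, q', hx', hy', h1⟩)
      · subst hb; subst hb'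
        have hx' : x = iotaQ (glue P Q f) R g' r := einj (hx.trans (e3 r).symm)
        have hy' : y = iotaQ (glue P Q f) R g' r' := einj (hy.trans (e3 r').symm)
        exact Or.inr (Or.inr (Or.inl ⟨r, r', hx', hy', h1⟩))
      · subst hb'
        have hx' : x = Sum.inl (iotaQ P Q f q) := einj (hx.trans (e2 q).symm)
        have hy' : y = iotaQ (glue P Q f) R g' r := einj (hy.trans (e3 r).symm)
        exact Or.inr (Or.inr (Or.inr (Or.inr (Or.inr ⟨q, r, hx', hy', hq, hr⟩))))
    · have hx' : x = Sum.inl (Sum.inl p) := einj (hx.trans (e1 p).symm)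
      rcases b with q | ⟨r, hr⟩
      · have hq : q ∉ Q.S := fun hq => hb ⟨q, hq, rfl⟩
        have hy' : y = Sum.inl (iotaQ P Q f q) := einj (hy.trans (e2 q).symm)
        exact Or.inr (Or.inr (Or.inr (Or.inl ⟨p, q, hx', hy', hp, hq⟩)))
      · have hb : (Sum.inr ⟨r, hr⟩ : (glue Q R g).car) = iotaQ Q R g r := (iotaQ_neg g hr).symm
        have hy' : y = iotaQ (glue P Q f) R g' r := by
          refine einj (hy.trans ?_)
          rw [hb, e3]
        exact Or.inr (Or.inr (Or.inr (Or.inr (Or.inl ⟨p, r, hx', hy', hp, hr⟩))))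
  · intro h
    rcases h with ⟨p, p', rfl, rfl, h1⟩ | ⟨q, q', rfl, rfl, h1⟩ | ⟨r, r', rfl, rfl, h1⟩ |
      ⟨p, q, rfl, rfl, hp, hq⟩ | ⟨p, r, rfl, rfl, hp, hr⟩ | ⟨q, r, rfl, rfl, hq, hr⟩
    · exact Or.inl ⟨p, p', e1 p, e1 p', h1⟩
    · exact Or.inr (Or.inl ⟨Sum.inl q, Sum.inl q', e2 q, e2 q',
        Or.inl ⟨q, q', rfl, rfl, h1⟩⟩)
    · exact Or.inr (Or.inl ⟨iotaQ Q R g r, iotaQ Q R g r', e3 r, e3 r',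
        Or.inr (Or.inl ⟨r, r', rfl, rfl, h1⟩)⟩)
    · exact Or.inr (Or.inr ⟨p, Sum.inl q, e1 p, e2 q, hp, inl_not_mem_glueS Q R g hq⟩)
    · refine Or.inr (Or.inr ⟨p, iotaQ Q R g r, e1 p, e3 r, hp, ?_⟩)
      rw [iotaQ_neg g hr]
      exact inr_not_mem_glueS Q R g ⟨r, hr⟩
    · exact Or.inr (Or.inl ⟨Sum.inl q, iotaQ Q R g r, e2 q, e3 r,
        Or.inr (Or.inr ⟨q, r, rfl, rfl, hq, hr⟩)⟩)

end AssocLt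
section AssocEo

variable {L : Type} (P Q R : PreIpomset L)
  (f : {x : P.car // x ∈ P.T} ≃ {y : Q.car // y ∈ Q.S})
  (g : {x : Q.car // x ∈ Q.T} ≃ {y : R.car // y ∈ R.S})
  (g' : {x : (glue P Q f).car // x ∈ (glue P Q f).T} ≃ {y : R.car // y ∈ R.S})
  (f' : {x : P.car // x ∈ P.T} ≃ {y : (glue Q R g).car // y ∈ (glue Q R g).S})

lemma lhs_eo_iff (x y : (glue (glue P Q f) R g').car) :
    (glue (glue P Q f) R g').eo x y ↔
      Relation.TransGen (midStep P Q R f g') x y := by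
  have hcongr : ∀ x y : (glue (glue P Q f) R g').car,
      ((∃ u v, x = Sum.inl u ∧ y = Sum.inl v ∧
        ((∃ a b, u = Sum.inl a ∧ v = Sum.inl b ∧ P.eo a b) ∨
         (∃ a b, u = iotaQ P Q f a ∧ v = iotaQ P Q f b ∧ Q.eo a b))) ∨
       (∃ a b, x = iotaQ (glue P Q f) R g' a ∧ y = iotaQ (glue P Q f) R g' b ∧ R.eo a b)) ↔
      midStep P Q R f g' x y := by
    intro x y
    constructor
    · rintro (⟨a, b, rfl, rfl, (⟨p, p', rfl, rfl, h⟩ | ⟨q, q', rfl, rfl, h⟩)⟩ | ⟨r, r', rfl, rfl, h⟩)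
      · exact Or.inl ⟨p, p', rfl, rfl, h⟩
      · exact Or.inr (Or.inl ⟨q, q', rfl, rfl, h⟩)
      · exact Or.inr (Or.inr ⟨r, r', rfl, rfl, h⟩)
    · rintro (⟨p, p', rfl, rfl, h⟩ | ⟨q, q', rfl, rfl, h⟩ | ⟨r, r', rfl, rfl, h⟩)
      · exact Or.inl ⟨Sum.inl p, Sum.inl p', rfl, rfl, Or.inl ⟨p, p', rfl, rfl, h⟩⟩
      · exact Or.inl ⟨iotaQ P Q f q, iotaQ P Q f q', rfl, rfl, Or.inr ⟨q, q', rfl, rfl, h⟩⟩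
      · exact Or.inr ⟨r, r', rfl, rfl, h⟩
  exact Iff.trans
    (transGen_absorb (Sum.inl : (glue P Q f).car → (glue (glue P Q f) R g').car)
      (fun a b => (∃ u v, a = Sum.inl u ∧ b = Sum.inl v ∧ P.eo u v) ∨
        (∃ u v, a = iotaQ P Q f u ∧ b = iotaQ P Q f v ∧ Q.eo u v))
      (fun x y => ∃ a b, x = iotaQ (glue P Q f) R g' a ∧ y = iotaQ (glue P Q f) R g' b ∧ R.eo a b))
    (transGen_congr hcongr)

lemma rhs_eo_iff
    (hg' : ∀ (t : {x : Q.car // x ∈ Q.T}) (ht : iotaQ P Q f t.1 ∈ (glue P Q f).T),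
      (g' ⟨iotaQ P Q f t.1, ht⟩).1 = (g t).1)
    (hf' : ∀ p : {x : P.car // x ∈ P.T}, (f' p).1 = Sum.inl (f p).1)
    (x y : (glue (glue P Q f) R g').car) :
    (glue P (glue Q R g) f').eo (assocEquiv P Q R f g g' f' x) (assocEquiv P Q R f g g' f' y) ↔
      Relation.TransGen (midStep P Q R f g') x y := by
  have einj := (assocEquiv P Q R f g g' f').injective
  have e1 : ∀ p, assocEquiv P Q R f g g' f' (Sum.inl (Sum.inl p)) = Sum.inl p :=
    assocEquiv_inl P Q R f g g' f'
  have e2 : ∀ q, assocEquiv P Q R f g g' f' (Sum.inl (iotaQ P Q f q)) =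
      iotaQ P (glue Q R g) f' (Sum.inl q) := assocEquiv_iota2 P Q R f g g' f' hf'
  have e3 : ∀ r, assocEquiv P Q R f g g' f' (iotaQ (glue P Q f) R g' r) =
      iotaQ P (glue Q R g) f' (iotaQ Q R g r) := assocEquiv_iota3 P Q R f g g' f' hg' hf'
  have hflip : ∀ u v : (glue P (glue Q R g) f').car,
      ((∃ a b, u = Sum.inl a ∧ v = Sum.inl b ∧ P.eo a b) ∨
       (∃ a b, u = iotaQ P (glue Q R g) f' a ∧ v = iotaQ P (glue Q R g) f' b ∧
         Relation.TransGen (fun a b =>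
           (∃ p q, a = Sum.inl p ∧ b = Sum.inl q ∧ Q.eo p q) ∨
           (∃ p q, a = iotaQ Q R g p ∧ b = iotaQ Q R g q ∧ R.eo p q)) a b)) ↔
      ((∃ a b, u = iotaQ P (glue Q R g) f' a ∧ v = iotaQ P (glue Q R g) f' b ∧
         Relation.TransGen (fun a b =>
           (∃ p q, a = Sum.inl p ∧ b = Sum.inl q ∧ Q.eo p q) ∨
           (∃ p q, a = iotaQ Q R g p ∧ b = iotaQ Q R g q ∧ R.eo p q)) a b) ∨
       (∃ a b, u = Sum.inl a ∧ v = Sum.inl b ∧ P.eo a b)) :=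
    fun u v => or_comm
  have hstep : ∀ x y : (glue (glue P Q f) R g').car,
      midStep P Q R f g' x y ↔
      ((∃ b b', assocEquiv P Q R f g g' f' x = iotaQ P (glue Q R g) f' b ∧
          assocEquiv P Q R f g g' f' y = iotaQ P (glue Q R g) f' b' ∧
          ((∃ p q, b = Sum.inl p ∧ b' = Sum.inl q ∧ Q.eo p q) ∨
           (∃ p q, b = iotaQ Q R g p ∧ b' = iotaQ Q R g q ∧ R.eo p q))) ∨
       (∃ p p', assocEquiv P Q R f g g' f' x = Sum.inl p ∧
          assocEquiv P Q R f g g' f' y = Sum.inl p' ∧ P.eo p p')) := by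
    intro x y
    constructor
    · rintro (⟨p, p', rfl, rfl, h⟩ | ⟨q, q', rfl, rfl, h⟩ | ⟨r, r', rfl, rfl, h⟩)
      · exact Or.inr ⟨p, p', e1 p, e1 p', h⟩
      · exact Or.inl ⟨Sum.inl q, Sum.inl q', e2 q, e2 q', Or.inl ⟨q, q', rfl, rfl, h⟩⟩
      · exact Or.inl ⟨iotaQ Q R g r, iotaQ Q R g r', e3 r, e3 r',
          Or.inr ⟨r, r', rfl, rfl, h⟩⟩
    · rintro (⟨b, b', hx, hy, (⟨q, q', rfl, rfl, h⟩ | ⟨r, r', rfl, rfl, h⟩)⟩ | ⟨p, p', hx, hy, h⟩)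
      · exact Or.inr (Or.inl ⟨q, q', einj (hx.trans (e2 q).symm),
          einj (hy.trans (e2 q').symm), h⟩)
      · exact Or.inr (Or.inr ⟨r, r', einj (hx.trans (e3 r).symm),
          einj (hy.trans (e3 r').symm), h⟩)
      · exact Or.inl ⟨p, p', einj (hx.trans (e1 p).symm), einj (hy.trans (e1 p').symm), h⟩
  exact Iff.trans
    (Iff.trans (transGen_congr hflip)
      (transGen_absorb (iotaQ P (glue Q R g) f')
        (fun a b => (∃ p q, a = Sum.inl p ∧ b = Sum.inl q ∧ Q.eo p q) ∨
          (∃ p q, a = iotaQ Q R g p ∧ b = iotaQ Q R g q ∧ R.eo p q))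
        (fun u v => ∃ a b, u = Sum.inl a ∧ v = Sum.inl b ∧ P.eo a b)))
    (transGen_equiv (assocEquiv P Q R f g g' f') hstep).symm

end AssocEo
/-- Gluing composition of ipomsets is associative up to the unique
isomorphism: for composable ipomsets `P, Q, R` (with interface isomorphisms
`f : T_P ≃ S_Q` and `g : T_Q ≃ S_R`, and the induced interface isomorphisms
`g' : T_{P*Q} ≃ S_R` and `f' : T_P ≃ S_{Q*R}`), we have
`(P * Q) * R ≅ P * (Q * R)`. -/
theorem glue_assoc {L : Type} (P Q R : PreIpomset L)
    (hP : IsIpomset P) (hQ : IsIpomset Q) (hR : IsIpomset R)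
    (f : {x : P.car // x ∈ P.T} ≃ {y : Q.car // y ∈ Q.S})
    (g : {x : Q.car // x ∈ Q.T} ≃ {y : R.car // y ∈ R.S})
    (hf : GlueOK P Q f) (hg : GlueOK Q R g)
    (g' : {x : (glue P Q f).car // x ∈ (glue P Q f).T} ≃ {y : R.car // y ∈ R.S})
    (hg' : ∀ (t : {x : Q.car // x ∈ Q.T}) (ht : iotaQ P Q f t.1 ∈ (glue P Q f).T),
      (g' ⟨iotaQ P Q f t.1, ht⟩).1 = (g t).1)
    (f' : {x : P.car // x ∈ P.T} ≃ {y : (glue Q R g).car // y ∈ (glue Q R g).S})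
    (hf' : ∀ p : {x : P.car // x ∈ P.T}, (f' p).1 = Sum.inl (f p).1) :
    IpomIso (glue (glue P Q f) R g') (glue P (glue Q R g) f') := by

  refine ⟨assocEquiv P Q R f g g' f', ?_, ?_, ?_, ?_, ?_⟩
  · intro x y
    exact (lhs_lt_iff P Q R f g' x y).trans (rhs_lt_iff P Q R f g g' f' hg' hf' x y).symm
  · intro x y
    exact (lhs_eo_iff P Q R f g' x y).trans (rhs_eo_iff P Q R f g g' f' hg' hf' x y).symm
  · rintro ((p | q) | r) <;> rfl
  · show assocEquiv P Q R f g g' f' '' (Sum.inl '' (Sum.inl '' P.S)) = Sum.inl '' P.S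
    erw [Set.image_image, Set.image_image]
    exact Set.image_congr' (fun p => assocEquiv_inl P Q R f g g' f' p)
  · show assocEquiv P Q R f g g' f' '' (iotaQ (glue P Q f) R g' '' R.T) =
      iotaQ P (glue Q R g) f' '' (iotaQ Q R g '' R.T)
    erw [Set.image_image, Set.image_image]
    exact Set.image_congr' (fun r => assocEquiv_iota3 P Q R f g g' f' hg' hf' r)
end

section
/- If P = P_1 * P_2 * ⋯ * P_m is the minimal discrete decomposition of an interval ipomset P, then the track object □^P equals the iterated gluing □^{P_1} * ⋯ * □^{P_m} of the standard cubes of the discrete pieces. -/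
attribute [local instance] Classical.propDecidable

/-- The `ε`-component of a composition: `η(u) = ε (g⁻¹ u)` for `u ∈ g(Q)`,
and `η(u) = ζ u` otherwise. -/
noncomputable def compEps {A B : Type} (g : A → B) (ε : A → Tri) (ζ : B → Tri) : B → Tri :=
  fun b => if h : ∃ a, g a = b then ε h.choose else ζ b

/-- The relation `≼_ipom = {(1,1),(0,0),(ex,ex),(1,ex),(1,0),(ex,0)}`. -/
def ipomRel : Tri → Tri → Prop := fun a b =>
  (a = Tri.one ∧ b = Tri.one) ∨ (a = Tri.zero ∧ b = Tri.zero) ∨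
  (a = Tri.ex ∧ b = Tri.ex) ∨ (a = Tri.one ∧ b = Tri.ex) ∨
  (a = Tri.one ∧ b = Tri.zero) ∨ (a = Tri.ex ∧ b = Tri.zero)

/-- `x` and `y` are concurrent (incomparable for the precedence order). -/
def IpomPar {L : Type} (P : PreIpomset L) (x y : P.car) : Prop :=
  x ≠ y ∧ ¬ P.lt x y ∧ ¬ P.lt y x

/-- `(f, ε)` is a morphism of (interval) ipomsets from `P` to `Q`:
`f` is injective, reflects the precedence order, preserves the essential event
order, and `ε : Q → {0, ex, 1}` satisfies `ε⁻¹(ex) = f(P)` and is compatible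
with the precedence order via `≼_ipom`. -/
def IsIPHom {L : Type} (P Q : PreIpomset L) (f : P.car → Q.car) (ε : Q.car → Tri) : Prop :=
  Function.Injective f ∧
  (∀ x y, Q.lt (f x) (f y) → P.lt x y) ∧
  (∀ x y, IpomPar P x y → P.eo x y → Q.eo (f x) (f y)) ∧
  (∀ q, ε q = Tri.ex ↔ q ∈ Set.range f) ∧
  (∀ q q', Q.lt q q' → ipomRel (ε q) (ε q'))

/-- The interface conclist of the gluing `Q * R`, i.e. the discrete ipomset on
`S_R ≅ T_Q`, with full interfaces. -/
def interfaceOb {L : Type} (R : PreIpomset L) : PreIpomset L where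
  car := {r : R.car // r ∈ R.S}
  lt := fun _ _ => False
  eo := fun a b => R.eo a.1 b.1
  lab := fun a => R.lab a.1
  S := Set.univ
  T := Set.univ

/-- Function part of the initial inclusion `U → R` of the interface. -/
def uInMap {L : Type} (R : PreIpomset L) : (interfaceOb R).car → R.car := Subtype.val

/-- `ε`-part of the initial inclusion `U → R` (events outside `S_R` unstarted). -/
noncomputable def uInEps {L : Type} (R : PreIpomset L) : R.car → Tri :=
  fun r => if r ∈ R.S then Tri.ex else Tri.zero

/-- Function part of the final inclusion `U → Q` of the interface. -/
noncomputable def uFinMap {L : Type} (Q R : PreIpomset L)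
    (g : {x : Q.car // x ∈ Q.T} ≃ {y : R.car // y ∈ R.S}) :
    (interfaceOb R).car → Q.car := fun u => (g.symm u).1

/-- `ε`-part of the final inclusion `U → Q` (events outside `T_Q` terminated). -/
noncomputable def uFinEps {L : Type} (Q : PreIpomset L) : Q.car → Tri :=
  fun q => if q ∈ Q.T then Tri.ex else Tri.one

/-- `ε`-part of the initial inclusion `Q → Q * R`. -/
def iQeps {L : Type} (Q R : PreIpomset L)
    (g : {x : Q.car // x ∈ Q.T} ≃ {y : R.car // y ∈ R.S}) : (glue Q R g).car → Tri :=
  fun x => match x with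
    | Sum.inl _ => Tri.ex
    | Sum.inr _ => Tri.zero

/-- `ε`-part of the final inclusion `R → Q * R`. -/
noncomputable def fReps {L : Type} (Q R : PreIpomset L)
    (g : {x : Q.car // x ∈ Q.T} ≃ {y : R.car // y ∈ R.S}) : (glue Q R g).car → Tri :=
  fun x => if x ∈ Set.range (iotaQ Q R g) then Tri.ex else Tri.one

/-- The track object `□^{Q*R}` is the pushout of
`□^R ← □^U → □^Q` (along the initial inclusion of `□^U` into `□^R` and the
final inclusion of `□^U` into `□^Q`).  Since colimits of presheaves are
computed objectwise, this is expressed on each cell-set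
`□^P[V] = hom_IP(V, P)`, for every conclist `V`: the square commutes, the two
legs into `hom(V, Q*R)` are injective and jointly surjective, and their
intersection is exactly the image of `hom(V, U)`. -/
def TrackGluePushout {L : Type} (Q R : PreIpomset L)
    (g : {x : Q.car // x ∈ Q.T} ≃ {y : R.car // y ∈ R.S}) : Prop :=
  ∀ (V : PreIpomset L), IsIpomset V → IsDiscreteIpom V →
    -- the square commutes
    ((∀ h θ, IsIPHom V (interfaceOb R) h θ →
      ((Sum.inl ∘ (uFinMap Q R g ∘ h) : V.car → (glue Q R g).car)
          = iotaQ Q R g ∘ (uInMap R ∘ h) ∧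
        compEps (Sum.inl : Q.car → (glue Q R g).car)
            (compEps (uFinMap Q R g) θ (uFinEps Q)) (iQeps Q R g)
          = compEps (iotaQ Q R g) (compEps (uInMap R) θ (uInEps R)) (fReps Q R g))) ∧
    -- joint surjectivity of the two legs
    (∀ k κ, IsIPHom V (glue Q R g) k κ →
      (∃ h θ, IsIPHom V Q h θ ∧ k = Sum.inl ∘ h ∧
        κ = compEps (Sum.inl : Q.car → (glue Q R g).car) θ (iQeps Q R g)) ∨
      (∃ h θ, IsIPHom V R h θ ∧ k = iotaQ Q R g ∘ h ∧
        κ = compEps (iotaQ Q R g) θ (fReps Q R g))) ∧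
    -- injectivity of the leg through □^Q
    (∀ h θ h' θ', IsIPHom V Q h θ → IsIPHom V Q h' θ' →
      (Sum.inl ∘ h : V.car → (glue Q R g).car) = Sum.inl ∘ h' →
      compEps (Sum.inl : Q.car → (glue Q R g).car) θ (iQeps Q R g)
        = compEps (Sum.inl : Q.car → (glue Q R g).car) θ' (iQeps Q R g) →
      h = h' ∧ θ = θ') ∧
    -- injectivity of the leg through □^R
    (∀ h θ h' θ', IsIPHom V R h θ → IsIPHom V R h' θ' →
      iotaQ Q R g ∘ h = iotaQ Q R g ∘ h' →
      compEps (iotaQ Q R g) θ (fReps Q R g) = compEps (iotaQ Q R g) θ' (fReps Q R g) →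
      h = h' ∧ θ = θ') ∧
    -- the intersection of the legs is the image of □^U
    (∀ hq θq hr θr, IsIPHom V Q hq θq → IsIPHom V R hr θr →
      (Sum.inl ∘ hq : V.car → (glue Q R g).car) = iotaQ Q R g ∘ hr →
      compEps (Sum.inl : Q.car → (glue Q R g).car) θq (iQeps Q R g)
        = compEps (iotaQ Q R g) θr (fReps Q R g) →
      ∃ h0 θ0, IsIPHom V (interfaceOb R) h0 θ0 ∧
        hq = uFinMap Q R g ∘ h0 ∧ θq = compEps (uFinMap Q R g) θ0 (uFinEps Q) ∧
        hr = uInMap R ∘ h0 ∧ θr = compEps (uInMap R) θ0 (uInEps R)))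

/-- `P` is an iterated (right-bracketed) gluing `P₁ * (P₂ * (⋯ * P_m))` of
discrete ipomsets, as given by the minimal discrete decomposition of an
interval ipomset. -/
inductive DiscTower {L : Type} : PreIpomset L → Prop
  | single (P : PreIpomset L) (hP : IsIpomset P) (hd : IsDiscreteIpom P) : DiscTower P
  | step (P Q : PreIpomset L)
      (f : {x : P.car // x ∈ P.T} ≃ {y : Q.car // y ∈ Q.S})
      (hP : IsIpomset P) (hd : IsDiscreteIpom P) (hf : GlueOK P Q f)
      (hQ : DiscTower Q) : DiscTower (glue P Q f)

/-- `□^P` is the iterated gluing (pushout) of the standard cubes of its discrete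
pieces: at every stage of the decomposition the corresponding track objects form
a pushout. -/
inductive TowerPushout {L : Type} : PreIpomset L → Prop
  | single (P : PreIpomset L) (hd : IsDiscreteIpom P) : TowerPushout P
  | step (P Q : PreIpomset L)
      (f : {x : P.car // x ∈ P.T} ≃ {y : Q.car // y ∈ Q.S})
      (hd : IsDiscreteIpom P)
      (hpush : TrackGluePushout P Q f)
      (hQ : TowerPushout Q) : TowerPushout (glue P Q f)

namespace TrackAux

open Relation

variable {L : Type} (P Q : PreIpomset L) (f : {x : P.car // x ∈ P.T} ≃ {y : Q.car // y ∈ Q.S})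

lemma iotaQ_of_mem {b : Q.car} (hb : b ∈ Q.S) :
    iotaQ P Q f b = Sum.inl (f.symm ⟨b, hb⟩).1 := dif_pos hb

lemma iotaQ_of_not_mem {b : Q.car} (hb : b ∉ Q.S) :
    iotaQ P Q f b = Sum.inr ⟨b, hb⟩ := dif_neg hb

lemma iotaQ_inj : Function.Injective (iotaQ P Q f) := by
  intro a b hab
  by_cases ha : a ∈ Q.S <;> by_cases hb : b ∈ Q.S
  · rw [iotaQ_of_mem P Q f ha, iotaQ_of_mem P Q f hb] at hab
    have h2 : f.symm ⟨a, ha⟩ = f.symm ⟨b, hb⟩ := Subtype.ext (Sum.inl.inj hab)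
    exact congrArg Subtype.val (f.symm.injective h2)
  · rw [iotaQ_of_mem P Q f ha, iotaQ_of_not_mem P Q f hb] at hab
    exact absurd hab (by simp)
  · rw [iotaQ_of_not_mem P Q f ha, iotaQ_of_mem P Q f hb] at hab
    exact absurd hab (by simp)
  · rw [iotaQ_of_not_mem P Q f ha, iotaQ_of_not_mem P Q f hb] at hab
    exact congrArg Subtype.val (Sum.inr.inj hab)

lemma inl_eq_iotaQ {a : P.car} {b : Q.car} (h : Sum.inl a = iotaQ P Q f b) :
    ∃ hb : b ∈ Q.S, a = (f.symm ⟨b, hb⟩).1 := by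
  by_cases hb : b ∈ Q.S
  · refine ⟨hb, ?_⟩
    rw [iotaQ_of_mem P Q f hb] at h
    exact Sum.inl.inj h
  · rw [iotaQ_of_not_mem P Q f hb] at h
    exact absurd h (by simp)

lemma inl_eq_iotaQ_of_T {a : P.car} (ha : a ∈ P.T) :
    Sum.inl a = iotaQ P Q f (f ⟨a, ha⟩).1 := by
  rw [iotaQ_of_mem P Q f (f ⟨a, ha⟩).2]
  have : f.symm ⟨(f ⟨a, ha⟩).1, (f ⟨a, ha⟩).2⟩ = ⟨a, ha⟩ := f.symm_apply_apply ⟨a, ha⟩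
  rw [this]

lemma inl_mem_range_iotaQ {a : P.car} :
    (Sum.inl a : P.car ⊕ {q : Q.car // q ∉ Q.S}) ∈ Set.range (iotaQ P Q f) ↔ a ∈ P.T := by
  constructor
  · rintro ⟨b, hb⟩
    obtain ⟨hbS, rfl⟩ := inl_eq_iotaQ P Q f hb.symm
    exact (f.symm ⟨b, hbS⟩).2
  · intro ha
    exact ⟨(f ⟨a, ha⟩).1, (inl_eq_iotaQ_of_T P Q f ha).symm⟩

lemma inr_mem_range_iotaQ (q : {q : Q.car // q ∉ Q.S}) :
    (Sum.inr q : P.car ⊕ {q : Q.car // q ∉ Q.S}) ∈ Set.range (iotaQ P Q f) :=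
  ⟨q.1, by rw [iotaQ_of_not_mem P Q f q.2]⟩

lemma compEps_app {A B : Type} {g : A → B} (hg : Function.Injective g)
    (ε : A → Tri) (ζ : B → Tri) (a : A) : compEps g ε ζ (g a) = ε a := by
  have h : ∃ a', g a' = g a := ⟨a, rfl⟩
  unfold compEps
  rw [dif_pos h]
  exact congrArg ε (hg h.choose_spec)

lemma compEps_not {A B : Type} {g : A → B} {b : B} (hb : ¬ ∃ a, g a = b)
    (ε : A → Tri) (ζ : B → Tri) : compEps g ε ζ b = ζ b := by
  unfold compEps
  rw [dif_neg hb]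

lemma eo_transfer_TT (hf : GlueOK P Q f) {t t' : P.car} (ht : t ∈ P.T) (ht' : t' ∈ P.T) :
    P.eo t t' ↔ Q.eo (f ⟨t, ht⟩).1 (f ⟨t', ht'⟩).1 := hf.1 ⟨t, ht⟩ ⟨t', ht'⟩

lemma eo_transfer_TS (hf : GlueOK P Q f) {t : P.car} (ht : t ∈ P.T) {s : Q.car} (hs : s ∈ Q.S) :
    Q.eo (f ⟨t, ht⟩).1 s ↔ P.eo t (f.symm ⟨s, hs⟩).1 := by
  have h := hf.1 ⟨t, ht⟩ (f.symm ⟨s, hs⟩)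
  rw [Equiv.apply_symm_apply] at h
  exact h.symm

lemma eo_transfer_ST (hf : GlueOK P Q f) {s : Q.car} (hs : s ∈ Q.S) {t : P.car} (ht : t ∈ P.T) :
    P.eo (f.symm ⟨s, hs⟩).1 t ↔ Q.eo s (f ⟨t, ht⟩).1 := by
  have h := hf.1 (f.symm ⟨s, hs⟩) ⟨t, ht⟩
  rw [Equiv.apply_symm_apply] at h
  exact h

lemma eo_transfer_SS (hf : GlueOK P Q f) {s s' : Q.car} (hs : s ∈ Q.S) (hs' : s' ∈ Q.S) :
    Q.eo s s' ↔ P.eo (f.symm ⟨s, hs⟩).1 (f.symm ⟨s', hs'⟩).1 := by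
  have h := hf.1 (f.symm ⟨s, hs⟩) (f.symm ⟨s', hs'⟩)
  rw [Equiv.apply_symm_apply, Equiv.apply_symm_apply] at h
  exact h.symm

end TrackAux
namespace TrackAux

variable {L : Type} (P Q : PreIpomset L) (f : {x : P.car // x ∈ P.T} ≃ {y : Q.car // y ∈ Q.S})

def GStep (x y : P.car ⊕ {q : Q.car // q ∉ Q.S}) : Prop :=
  (∃ a b, x = Sum.inl a ∧ y = Sum.inl b ∧ P.eo a b) ∨
  (∃ a b, x = iotaQ P Q f a ∧ y = iotaQ P Q f b ∧ Q.eo a b)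

lemma glue_eo_eq : (glue P Q f).eo = Relation.TransGen (GStep P Q f) := rfl

def EoShape (x y : P.car ⊕ {q : Q.car // q ∉ Q.S}) : Prop :=
  (∃ a b, x = Sum.inl a ∧ y = Sum.inl b ∧ P.eo a b) ∨
  (∃ a b, x = iotaQ P Q f a ∧ y = iotaQ P Q f b ∧ Q.eo a b) ∨
  (∃ (a : P.car) (b : Q.car) (t : {x : P.car // x ∈ P.T}), x = Sum.inl a ∧ y = iotaQ P Q f b ∧
    P.eo a t.1 ∧ Q.eo (f t).1 b) ∨
  (∃ (a : Q.car) (b : P.car) (s : {y : Q.car // y ∈ Q.S}), x = iotaQ P Q f a ∧ y = Sum.inl b ∧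
    Q.eo a s.1 ∧ P.eo (f.symm s).1 b)

lemma eoShape_of_glue_eo (hP : IsIpomset P) (hQ : IsIpomset Q) (hf : GlueOK P Q f)
    {x y : P.car ⊕ {q : Q.car // q ∉ Q.S}} (h : (glue P Q f).eo x y) :
    EoShape P Q f x y := by
  have hPtr := hP.2.2.2.2.1
  have hQtr := hQ.2.2.2.2.1
  rw [glue_eo_eq] at h
  induction h with
  | single hs =>
    rcases hs with ⟨a, b, hx, hy, hab⟩ | ⟨a, b, hx, hy, hab⟩
    · exact Or.inl ⟨a, b, hx, hy, hab⟩
    · exact Or.inr (Or.inl ⟨a, b, hx, hy, hab⟩)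
  | tail _ hs ih =>
    rcases hs with ⟨c, d, hy1, hz, hcd⟩ | ⟨c, d, hy1, hz, hcd⟩
    · -- P-type step: y = inl c, z = inl d, P.eo c d
      rcases ih with ⟨a, b, hx, hy2, hab⟩ | ⟨a, b, hx, hy2, hab⟩ |
        ⟨a, b, t, hx, hy2, hab, htb⟩ | ⟨a, b, s, hx, hy2, hab, hsb⟩
      · -- shape1
        obtain rfl : b = c := Sum.inl.inj (hy2.symm.trans hy1)
        exact Or.inl ⟨a, d, hx, hz, hPtr a b d hab hcd⟩
      · -- shape2: y = iotaQ b = inl c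
        obtain ⟨hbS, hceq⟩ := inl_eq_iotaQ P Q f (hy1.symm.trans hy2)
        refine Or.inr (Or.inr (Or.inr ⟨a, d, ⟨b, hbS⟩, hx, hz, hab, ?_⟩))
        rw [← hceq]; exact hcd
      · -- shape3
        obtain ⟨hbS, hceq⟩ := inl_eq_iotaQ P Q f (hy1.symm.trans hy2)
        have h1 : P.eo t.1 (f.symm ⟨b, hbS⟩).1 :=
          (eo_transfer_TS P Q f hf t.2 hbS).mp htb
        refine Or.inl ⟨a, d, hx, hz, hPtr a t.1 d hab (hPtr t.1 c d ?_ hcd)⟩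
        rw [hceq]; exact h1
      · -- shape4: y = inl b = inl c
        obtain rfl : b = c := Sum.inl.inj (hy2.symm.trans hy1)
        exact Or.inr (Or.inr (Or.inr ⟨a, d, s, hx, hz, hab, hPtr _ b d hsb hcd⟩))
    · -- Q-type step: y = iotaQ c, z = iotaQ d, Q.eo c d
      rcases ih with ⟨a, b, hx, hy2, hab⟩ | ⟨a, b, hx, hy2, hab⟩ |
        ⟨a, b, t, hx, hy2, hab, htb⟩ | ⟨a, b, s, hx, hy2, hab, hsb⟩
      · -- shape1: y = inl b = iotaQ c
        obtain ⟨hcS, hbeq⟩ := inl_eq_iotaQ P Q f (hy2.symm.trans hy1)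
        refine Or.inr (Or.inr (Or.inl ⟨a, d, f.symm ⟨c, hcS⟩, hx, hz, ?_, ?_⟩))
        · rw [← hbeq]; exact hab
        · have : f (f.symm ⟨c, hcS⟩) = ⟨c, hcS⟩ := f.apply_symm_apply _
          rw [this]; exact hcd
      · -- shape2
        obtain rfl : b = c := iotaQ_inj P Q f (hy2.symm.trans hy1)
        exact Or.inr (Or.inl ⟨a, d, hx, hz, hQtr a b d hab hcd⟩)
      · -- shape3
        obtain rfl : b = c := iotaQ_inj P Q f (hy2.symm.trans hy1)
        exact Or.inr (Or.inr (Or.inl ⟨a, d, t, hx, hz, hab, hQtr _ b d htb hcd⟩))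
      · -- shape4: y = inl b = iotaQ c
        obtain ⟨hcS, hbeq⟩ := inl_eq_iotaQ P Q f (hy2.symm.trans hy1)
        have h1 : Q.eo s.1 c := by
          have := (eo_transfer_ST P Q f hf s.2 (f.symm ⟨c, hcS⟩).2).mp
            (by rw [← hbeq]; exact hsb)
          have h2 : f ⟨(f.symm ⟨c, hcS⟩).1, (f.symm ⟨c, hcS⟩).2⟩ = ⟨c, hcS⟩ := by
            exact f.apply_symm_apply _
          rw [h2] at this
          exact this
        exact Or.inr (Or.inl ⟨a, d, hx, hz, hQtr a s.1 d hab (hQtr s.1 c d h1 hcd)⟩)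

end TrackAux
namespace TrackAux

variable {L : Type} (P Q : PreIpomset L) (f : {x : P.car // x ∈ P.T} ≃ {y : Q.car // y ∈ Q.S})

lemma glue_eo_inl (hP : IsIpomset P) (hQ : IsIpomset Q) (hf : GlueOK P Q f)
    {a b : P.car} (h : (glue P Q f).eo (Sum.inl a) (Sum.inl b)) : P.eo a b := by
  have hPtr := hP.2.2.2.2.1
  rcases eoShape_of_glue_eo P Q f hP hQ hf h with ⟨a', b', hx, hy, hab⟩ |
    ⟨a', b', hx, hy, hab⟩ | ⟨a', b', t, hx, hy, hab, htb⟩ | ⟨a', b', s, hx, hy, hab, hsb⟩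
  · obtain rfl : a = a' := Sum.inl.inj hx
    obtain rfl : b = b' := Sum.inl.inj hy
    exact hab
  · obtain ⟨haS, haeq⟩ := inl_eq_iotaQ P Q f hx
    obtain ⟨hbS, hbeq⟩ := inl_eq_iotaQ P Q f hy
    rw [haeq, hbeq]
    exact (eo_transfer_SS P Q f hf haS hbS).mp hab
  · obtain rfl : a = a' := Sum.inl.inj hx
    obtain ⟨hbS, hbeq⟩ := inl_eq_iotaQ P Q f hy
    have h1 : P.eo t.1 (f.symm ⟨b', hbS⟩).1 := (eo_transfer_TS P Q f hf t.2 hbS).mp htb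
    rw [hbeq]
    exact hPtr _ _ _ hab h1
  · obtain ⟨haS, haeq⟩ := inl_eq_iotaQ P Q f hx
    obtain rfl : b = b' := Sum.inl.inj hy
    have h1 : P.eo (f.symm ⟨a', haS⟩).1 (f.symm s).1 := by
      have := (eo_transfer_SS P Q f hf haS s.2).mp hab
      exact this
    rw [haeq]
    exact hPtr _ _ _ h1 hsb

lemma glue_eo_iotaQ (hP : IsIpomset P) (hQ : IsIpomset Q) (hf : GlueOK P Q f)
    {a b : Q.car} (h : (glue P Q f).eo (iotaQ P Q f a) (iotaQ P Q f b)) : Q.eo a b := by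
  have hQtr := hQ.2.2.2.2.1
  rcases eoShape_of_glue_eo P Q f hP hQ hf h with ⟨a', b', hx, hy, hab⟩ |
    ⟨a', b', hx, hy, hab⟩ | ⟨a', b', t, hx, hy, hab, htb⟩ | ⟨a', b', s, hx, hy, hab, hsb⟩
  · obtain ⟨haS, haeq⟩ := inl_eq_iotaQ P Q f hx.symm
    obtain ⟨hbS, hbeq⟩ := inl_eq_iotaQ P Q f hy.symm
    rw [haeq, hbeq] at hab
    exact (eo_transfer_SS P Q f hf haS hbS).mpr hab
  · obtain rfl : a = a' := iotaQ_inj P Q f hx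
    obtain rfl : b = b' := iotaQ_inj P Q f hy
    exact hab
  · obtain ⟨haS, haeq⟩ := inl_eq_iotaQ P Q f hx.symm
    obtain rfl : b = b' := iotaQ_inj P Q f hy
    rw [haeq] at hab
    have h1 : Q.eo a (f ⟨t.1, t.2⟩).1 := (eo_transfer_ST P Q f hf haS t.2).mp hab
    exact hQtr _ _ _ h1 htb
  · obtain rfl : a = a' := iotaQ_inj P Q f hx
    obtain ⟨hbS, hbeq⟩ := inl_eq_iotaQ P Q f hy.symm
    rw [hbeq] at hsb
    have h1 : Q.eo s.1 b := (eo_transfer_SS P Q f hf s.2 hbS).mpr hsb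
    exact hQtr _ _ _ hab h1

lemma glue_eo_irrefl (hP : IsIpomset P) (hQ : IsIpomset Q) (hf : GlueOK P Q f)
    (x : (glue P Q f).car) : ¬ (glue P Q f).eo x x := by
  intro h
  have hPtr := hP.2.2.2.2.1
  have hQtr := hQ.2.2.2.2.1
  rcases eoShape_of_glue_eo P Q f hP hQ hf h with ⟨a, b, hx, hy, hab⟩ |
    ⟨a, b, hx, hy, hab⟩ | ⟨a, b, t, hx, hy, hab, htb⟩ | ⟨a, b, s, hx, hy, hab, hsb⟩
  · obtain rfl : a = b := Sum.inl.inj (hx.symm.trans hy)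
    exact hP.2.2.2.1 a hab
  · obtain rfl : a = b := iotaQ_inj P Q f (hx.symm.trans hy)
    exact hQ.2.2.2.1 a hab
  · obtain ⟨hbS, haeq⟩ := inl_eq_iotaQ P Q f (hx.symm.trans hy)
    have h1 : P.eo t.1 (f.symm ⟨b, hbS⟩).1 := (eo_transfer_TS P Q f hf t.2 hbS).mp htb
    rw [haeq] at hab
    exact hP.2.2.2.1 _ (hPtr _ _ _ h1 hab)
  · obtain ⟨haS, hbeq⟩ := inl_eq_iotaQ P Q f (hy.symm.trans hx)
    rw [hbeq] at hsb
    have h1 : Q.eo s.1 a := (eo_transfer_SS P Q f hf s.2 haS).mpr hsb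
    exact hQ.2.2.2.1 _ (hQtr _ _ _ hab h1)

end TrackAux
namespace TrackAux

variable {L : Type} (P Q : PreIpomset L) (f : {x : P.car // x ∈ P.T} ≃ {y : Q.car // y ∈ Q.S})

lemma glue_isIpomset (hP : IsIpomset P) (hQ : IsIpomset Q) (hf : GlueOK P Q f) :
    IsIpomset (glue P Q f) := by
  obtain ⟨hPfin, hPlt_ir, hPlt_tr, hPeo_ir, hPeo_tr, hPtot, hPS, hPT⟩ := id hP
  obtain ⟨hQfin, hQlt_ir, hQlt_tr, hQeo_ir, hQeo_tr, hQtot, hQS, hQT⟩ := id hQ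
  refine ⟨?_, ?_, ?_, ?_, ?_, ?_, ?_, ?_⟩
  · -- finite
    haveI := hPfin; haveI := hQfin
    exact (inferInstance : Finite (P.car ⊕ {q : Q.car // q ∉ Q.S}))
  · -- lt irreflexive
    intro x hx
    rcases hx with ⟨a, b, h1, h2, h3⟩ | ⟨a, b, h1, h2, h3⟩ | ⟨a, b, h1, h2, _, hbS⟩
    · obtain rfl : a = b := Sum.inl.inj (h1.symm.trans h2)
      exact hPlt_ir a h3
    · obtain rfl : a = b := iotaQ_inj P Q f (h1.symm.trans h2)
      exact hQlt_ir a h3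
    · obtain ⟨hbS', _⟩ := inl_eq_iotaQ P Q f (h1.symm.trans h2)
      exact hbS hbS'
  · -- lt transitive
    intro x y z hxy hyz
    rcases hxy with ⟨a, b, hx, hy, hab⟩ | ⟨a, b, hx, hy, hab⟩ | ⟨a, b, hx, hy, haT, hbS⟩ <;>
      rcases hyz with ⟨c, d, hy', hz, hcd⟩ | ⟨c, d, hy', hz, hcd⟩ | ⟨c, d, hy', hz, hcT, hdS⟩
    · obtain rfl : b = c := Sum.inl.inj (hy.symm.trans hy')
      exact Or.inl ⟨a, d, hx, hz, hPlt_tr a b d hab hcd⟩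
    · -- P.lt a b, then Q.lt c d with inl b = iotaQ c
      obtain ⟨hcS, hbeq⟩ := inl_eq_iotaQ P Q f (hy.symm.trans hy')
      refine Or.inr (Or.inr ⟨a, d, hx, hz, ?_, ?_⟩)
      · intro haT; exact hPT a haT b hab
      · intro hdS; exact hQS d hdS c hcd
    · obtain rfl : b = c := Sum.inl.inj (hy.symm.trans hy')
      refine Or.inr (Or.inr ⟨a, d, hx, hz, ?_, hdS⟩)
      intro haT; exact hPT a haT b hab
    · -- Q.lt a b with iotaQ b = inl c
      obtain ⟨hbS, _⟩ := inl_eq_iotaQ P Q f (hy'.symm.trans hy)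
      exact absurd hab (hQS b hbS a)
    · obtain rfl : b = c := iotaQ_inj P Q f (hy.symm.trans hy')
      exact Or.inr (Or.inl ⟨a, d, hx, hz, hQlt_tr a b d hab hcd⟩)
    · obtain ⟨hbS, _⟩ := inl_eq_iotaQ P Q f (hy'.symm.trans hy)
      exact absurd hab (hQS b hbS a)
    · -- third then P-step: y = iotaQ b (b ∉ S) = inl c
      obtain ⟨hbS', _⟩ := inl_eq_iotaQ P Q f (hy'.symm.trans hy)
      exact absurd hbS' hbS
    · -- third then Q-step: iotaQ b = iotaQ c
      obtain rfl : b = c := iotaQ_inj P Q f (hy.symm.trans hy')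
      refine Or.inr (Or.inr ⟨a, d, hx, hz, haT, ?_⟩)
      intro hdS; exact hQS d hdS b hcd
    · -- third then third: y = iotaQ b (b ∉ S) and y = inl c
      obtain ⟨hbS', _⟩ := inl_eq_iotaQ P Q f (hy'.symm.trans hy)
      exact absurd hbS' hbS
  · -- eo irreflexive
    exact glue_eo_irrefl P Q f hP hQ hf
  · -- eo transitive
    intro x y z h1 h2
    exact Relation.TransGen.trans h1 h2
  · -- totality
    intro x y hxy
    rcases x with a | q <;> rcases y with b | r
    · have hab : a ≠ b := fun h => hxy (congrArg Sum.inl h)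
      rcases hPtot a b hab with h | h | h | h
      · exact Or.inl (Or.inl ⟨a, b, rfl, rfl, h⟩)
      · exact Or.inr (Or.inl (Or.inl ⟨b, a, rfl, rfl, h⟩))
      · exact Or.inr (Or.inr (Or.inl (Relation.TransGen.single (Or.inl ⟨a, b, rfl, rfl, h⟩))))
      · exact Or.inr (Or.inr (Or.inr (Relation.TransGen.single (Or.inl ⟨b, a, rfl, rfl, h⟩))))
    · -- inl a vs inr r
      by_cases haT : a ∈ P.T
      · have hxa : (Sum.inl a : (glue P Q f).car) = iotaQ P Q f (f ⟨a, haT⟩).1 :=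
          inl_eq_iotaQ_of_T P Q f haT
        have hyr : (Sum.inr r : (glue P Q f).car) = iotaQ P Q f r.1 :=
          (iotaQ_of_not_mem P Q f r.2).symm
        have hne : (f ⟨a, haT⟩).1 ≠ r.1 := by
          intro h
          apply hxy
          rw [hxa, hyr, h]
        rcases hQtot _ _ hne with h | h | h | h
        · exact Or.inl (Or.inr (Or.inl ⟨_, _, hxa, hyr, h⟩))
        · exact Or.inr (Or.inl (Or.inr (Or.inl ⟨_, _, hyr, hxa, h⟩)))
        · exact Or.inr (Or.inr (Or.inl (Relation.TransGen.single (Or.inr ⟨_, _, hxa, hyr, h⟩))))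
        · exact Or.inr (Or.inr (Or.inr (Relation.TransGen.single (Or.inr ⟨_, _, hyr, hxa, h⟩))))
      · exact Or.inl (Or.inr (Or.inr ⟨a, r.1, rfl, (iotaQ_of_not_mem P Q f r.2).symm, haT, r.2⟩))
    · -- inr q vs inl b
      by_cases hbT : b ∈ P.T
      · have hyb : (Sum.inl b : (glue P Q f).car) = iotaQ P Q f (f ⟨b, hbT⟩).1 :=
          inl_eq_iotaQ_of_T P Q f hbT
        have hxq : (Sum.inr q : (glue P Q f).car) = iotaQ P Q f q.1 :=
          (iotaQ_of_not_mem P Q f q.2).symm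
        have hne : q.1 ≠ (f ⟨b, hbT⟩).1 := by
          intro h
          apply hxy
          rw [hxq, hyb, h]
        rcases hQtot _ _ hne with h | h | h | h
        · exact Or.inl (Or.inr (Or.inl ⟨_, _, hxq, hyb, h⟩))
        · exact Or.inr (Or.inl (Or.inr (Or.inl ⟨_, _, hyb, hxq, h⟩)))
        · exact Or.inr (Or.inr (Or.inl (Relation.TransGen.single (Or.inr ⟨_, _, hxq, hyb, h⟩))))
        · exact Or.inr (Or.inr (Or.inr (Relation.TransGen.single (Or.inr ⟨_, _, hyb, hxq, h⟩))))
      · exact Or.inr (Or.inl (Or.inr (Or.inr ⟨b, q.1, rfl, (iotaQ_of_not_mem P Q f q.2).symm, hbT, q.2⟩)))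
    · -- inr q vs inr r
      have hne : q.1 ≠ r.1 := by
        intro h
        exact hxy (congrArg Sum.inr (Subtype.ext h))
      have hxq : (Sum.inr q : (glue P Q f).car) = iotaQ P Q f q.1 :=
        (iotaQ_of_not_mem P Q f q.2).symm
      have hyr : (Sum.inr r : (glue P Q f).car) = iotaQ P Q f r.1 :=
        (iotaQ_of_not_mem P Q f r.2).symm
      rcases hQtot _ _ hne with h | h | h | h
      · exact Or.inl (Or.inr (Or.inl ⟨_, _, hxq, hyr, h⟩))
      · exact Or.inr (Or.inl (Or.inr (Or.inl ⟨_, _, hyr, hxq, h⟩)))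
      · exact Or.inr (Or.inr (Or.inl (Relation.TransGen.single (Or.inr ⟨_, _, hxq, hyr, h⟩))))
      · exact Or.inr (Or.inr (Or.inr (Relation.TransGen.single (Or.inr ⟨_, _, hyr, hxq, h⟩))))
  · -- S minimal
    rintro x ⟨a, haS, rfl⟩ y hyx
    rcases hyx with ⟨c, d, hy, hx, hcd⟩ | ⟨c, d, hy, hx, hcd⟩ | ⟨c, d, hy, hx, hcT, hdS⟩
    · cases Sum.inl.inj hx
      exact hPS _ haS c hcd
    · obtain ⟨hdS, _⟩ := inl_eq_iotaQ P Q f hx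
      exact hQS d hdS c hcd
    · obtain ⟨hdS', _⟩ := inl_eq_iotaQ P Q f hx
      exact hdS hdS'
  · -- T maximal
    rintro x ⟨t, htT, rfl⟩ y hxy
    rcases hxy with ⟨c, d, hx, hy, hcd⟩ | ⟨c, d, hx, hy, hcd⟩ | ⟨c, d, hx, hy, hcT, hdS⟩
    · obtain ⟨htS, hceq⟩ := inl_eq_iotaQ P Q f hx.symm
      have : c ∈ P.T := hceq ▸ (f.symm ⟨t, htS⟩).2
      exact hPT c this d hcd
    · cases iotaQ_inj P Q f hx
      exact hQT _ htT d hcd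
    · obtain ⟨htS, hceq⟩ := inl_eq_iotaQ P Q f hx.symm
      exact hcT (hceq ▸ (f.symm ⟨t, htS⟩).2)

lemma tower_isIpomset {R : PreIpomset L} (h : DiscTower R) : IsIpomset R := by
  induction h with
  | single P hP hd => exact hP
  | step P Q f hP hd hf hQ ih => exact glue_isIpomset P Q f hP ih hf

end TrackAux
namespace TrackAux

variable {L : Type}

lemma uFinMap_inj (Q R : PreIpomset L) (g : {x : Q.car // x ∈ Q.T} ≃ {y : R.car // y ∈ R.S}) :
    Function.Injective (uFinMap Q R g) :=
  fun _ _ h => g.symm.injective (Subtype.ext h)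

lemma uInMap_inj (R : PreIpomset L) : Function.Injective (uInMap R) :=
  fun _ _ h => Subtype.ext h

lemma uFinMap_apply_g (Q R : PreIpomset L) (g : {x : Q.car // x ∈ Q.T} ≃ {y : R.car // y ∈ R.S})
    {q : Q.car} (hq : q ∈ Q.T) : uFinMap Q R g (g ⟨q, hq⟩) = q :=
  congrArg Subtype.val (g.symm_apply_apply ⟨q, hq⟩)

lemma not_range_uFinMap (Q R : PreIpomset L) (g : {x : Q.car // x ∈ Q.T} ≃ {y : R.car // y ∈ R.S})
    {q : Q.car} (hq : q ∉ Q.T) : ¬ ∃ u, uFinMap Q R g u = q := by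
  rintro ⟨u, rfl⟩; exact hq (g.symm u).2

theorem trackGlue (Q R : PreIpomset L)
    (g : {x : Q.car // x ∈ Q.T} ≃ {y : R.car // y ∈ R.S})
    (hQ : IsIpomset Q) (hdQ : IsDiscreteIpom Q) (hR : IsIpomset R) (hg : GlueOK Q R g) :
    TrackGluePushout Q R g := by
  intro V hV hdV
  refine ⟨?_, ?_, ?_, ?_, ?_⟩
  · -- square commutes
    intro h θ _
    constructor
    · funext v
      show Sum.inl (uFinMap Q R g (h v)) = iotaQ Q R g (h v).1
      rw [iotaQ_of_mem Q R g (h v).2]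
      rfl
    · funext x
      rcases x with a | q
      · erw [compEps_app Sum.inl_injective]
        by_cases haT : a ∈ Q.T
        · have h1 := compEps_app (uFinMap_inj Q R g) θ (uFinEps Q) (g ⟨a, haT⟩)
          rw [uFinMap_apply_g Q R g haT] at h1
          rw [h1]
          erw [inl_eq_iotaQ_of_T Q R g haT, compEps_app (iotaQ_inj Q R g)]
          have h3 := compEps_app (uInMap_inj R) θ (uInEps R) (g ⟨a, haT⟩)
          rw [show uInMap R (g ⟨a, haT⟩) = (g ⟨a, haT⟩).1 from rfl] at h3
          rw [h3]
        · rw [compEps_not (not_range_uFinMap Q R g haT)]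
          have h4 : ¬ ∃ r, iotaQ Q R g r = (Sum.inl a : (glue Q R g).car) := by
            intro hr
            exact haT ((inl_mem_range_iotaQ Q R g).mp hr)
          erw [compEps_not h4]
          show uFinEps Q a = fReps Q R g (Sum.inl a)
          unfold uFinEps fReps
          erw [if_neg haT, if_neg (show (Sum.inl a : (glue Q R g).car) ∉ Set.range (iotaQ Q R g) from h4)]
      · rw [show (Sum.inr q : (glue Q R g).car) = iotaQ Q R g q.1 from
          (iotaQ_of_not_mem Q R g q.2).symm]
        have h5 : ¬ ∃ a, (Sum.inl a : (glue Q R g).car) = iotaQ Q R g q.1 := by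
          rintro ⟨a, ha⟩
          exact q.2 (inl_eq_iotaQ Q R g ha).choose
        erw [compEps_not h5, compEps_app (iotaQ_inj Q R g)]
        have h7 : ¬ ∃ u : (interfaceOb R).car, uInMap R u = q.1 := by
          rintro ⟨u, hu⟩
          exact q.2 (hu ▸ u.2)
        rw [compEps_not h7]
        rw [iotaQ_of_not_mem Q R g q.2]
        show Tri.zero = uInEps R q.1
        unfold uInEps
        rw [if_neg q.2]
  · -- joint surjectivity
    intro k κ hk
    obtain ⟨hkinj, hkrefl, hkeo, hkeps, hkrel⟩ := hk
    by_cases hzero : ∀ q : {q : R.car // q ∉ R.S}, κ (Sum.inr q) = Tri.zero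
    · left
      have hno : ∀ v, ∃ a, k v = Sum.inl a := by
        intro v
        rcases hkv : k v with a | q
        · exact ⟨a, rfl⟩
        · exfalso
          have hex : κ (k v) = Tri.ex := (hkeps (k v)).mpr ⟨v, rfl⟩
          rw [hkv, hzero q] at hex
          exact Tri.noConfusion hex
      choose h hh using hno
      refine ⟨h, fun a => κ (Sum.inl a), ⟨?_, ?_, ?_, ?_, ?_⟩, ?_, ?_⟩
      · intro x y hxy
        exact hkinj (by rw [hh x, hh y, hxy])
      · intro x y hxy
        exact absurd hxy (hdQ _ _)
      · intro x y hpar hxy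
        have := hkeo x y hpar hxy
        rw [hh x, hh y] at this
        exact glue_eo_inl Q R g hQ hR hg this
      · intro q
        constructor
        · intro hex
          obtain ⟨v, hv⟩ := (hkeps (Sum.inl q)).mp hex
          exact ⟨v, Sum.inl.inj ((hh v).symm.trans hv)⟩
        · rintro ⟨v, rfl⟩
          exact (hkeps _).mpr ⟨v, hh v⟩
      · intro q q' hlt
        exact absurd hlt (hdQ q q')
      · funext v
        exact hh v
      · funext x
        rcases x with a | q
        · exact (compEps_app Sum.inl_injective (fun a => κ (Sum.inl a)) (iQeps Q R g) a).symm
        · erw [compEps_not (show ¬ ∃ a, (Sum.inl a : (glue Q R g).car) = Sum.inr q by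
            rintro ⟨a, ha⟩; exact Sum.inl_ne_inr ha)]
          exact hzero q
    · right
      push_neg at hzero
      obtain ⟨q0, hq0⟩ := hzero
      have hone : ∀ a, a ∉ Q.T → κ (Sum.inl a) = Tri.one := by
        intro a haT
        have hlt : (glue Q R g).lt (Sum.inl a) (Sum.inr q0) :=
          Or.inr (Or.inr ⟨a, q0.1, rfl, (iotaQ_of_not_mem Q R g q0.2).symm, haT, q0.2⟩)
        have hrel := hkrel _ _ hlt
        rcases hrel with ⟨h1, h2⟩ | ⟨h1, h2⟩ | ⟨h1, h2⟩ | ⟨h1, h2⟩ | ⟨h1, h2⟩ | ⟨h1, h2⟩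
        · exact h1
        · exact absurd h2 hq0
        · exfalso
          obtain ⟨v, hv⟩ := (hkeps _).mp h1
          obtain ⟨v', hv'⟩ := (hkeps _).mp h2
          rw [← hv, ← hv'] at hlt
          exact absurd (hkrefl _ _ hlt) (hdV v v')
        · exact h1
        · exact h1
        · exact absurd h2 hq0
      have hrange : ∀ v, ∃ r, iotaQ Q R g r = k v := by
        intro v
        rcases hkv : k v with a | q
        · by_cases haT : a ∈ Q.T
          · exact ⟨(g ⟨a, haT⟩).1, (inl_eq_iotaQ_of_T Q R g haT).symm⟩
          · exfalso
            have hex : κ (k v) = Tri.ex := (hkeps (k v)).mpr ⟨v, rfl⟩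
            rw [hkv, hone a haT] at hex
            exact Tri.noConfusion hex
        · exact ⟨q.1, iotaQ_of_not_mem Q R g q.2⟩
      choose h hh using hrange
      refine ⟨h, fun r => κ (iotaQ Q R g r), ⟨?_, ?_, ?_, ?_, ?_⟩, ?_, ?_⟩
      · intro x y hxy
        exact hkinj (by rw [← hh x, ← hh y, hxy])
      · intro x y hxy
        have hlt : (glue Q R g).lt (k x) (k y) := by
          rw [← hh x, ← hh y]
          exact Or.inr (Or.inl ⟨h x, h y, rfl, rfl, hxy⟩)
        exact hkrefl x y hlt
      · intro x y hpar hxy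
        have := hkeo x y hpar hxy
        rw [← hh x, ← hh y] at this
        exact glue_eo_iotaQ Q R g hQ hR hg this
      · intro r
        constructor
        · intro hex
          obtain ⟨v, hv⟩ := (hkeps (iotaQ Q R g r)).mp hex
          exact ⟨v, iotaQ_inj Q R g ((hh v).trans hv)⟩
        · rintro ⟨v, rfl⟩
          exact (hkeps _).mpr ⟨v, (hh v).symm⟩
      · intro r r' hlt
        have hlt' : (glue Q R g).lt (iotaQ Q R g r) (iotaQ Q R g r') :=
          Or.inr (Or.inl ⟨r, r', rfl, rfl, hlt⟩)
        exact hkrel _ _ hlt'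
      · funext v
        exact (hh v).symm
      · funext x
        by_cases hx : ∃ r, iotaQ Q R g r = x
        · obtain ⟨r, rfl⟩ := hx
          erw [compEps_app (iotaQ_inj Q R g)]
        · erw [compEps_not hx]
          have hone' : κ x = Tri.one := by
            rcases x with a | q
            · by_cases haT : a ∈ Q.T
              · exact absurd ((inl_mem_range_iotaQ Q R g).mpr haT) hx
              · exact hone a haT
            · exact absurd (inr_mem_range_iotaQ Q R g q) hx
          rw [hone']
          show Tri.one = fReps Q R g x
          unfold fReps
          rw [if_neg (show x ∉ Set.range (iotaQ Q R g) from hx)]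
  · -- injectivity of the Q-leg
    intro h θ h' θ' _ _ hkeq hepseq
    constructor
    · funext v
      exact Sum.inl_injective (congrFun hkeq v)
    · funext a
      have e := congrFun hepseq (Sum.inl a)
      erw [compEps_app Sum.inl_injective, compEps_app Sum.inl_injective] at e
      exact e
  · -- injectivity of the R-leg
    intro h θ h' θ' _ _ hkeq hepseq
    constructor
    · funext v
      exact iotaQ_inj Q R g (congrFun hkeq v)
    · funext r
      have e := congrFun hepseq (iotaQ Q R g r)
      erw [compEps_app (iotaQ_inj Q R g), compEps_app (iotaQ_inj Q R g)] at e
      exact e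
  · -- intersection
    intro hq θq hr θr hhq hhr hkeq hepseq
    obtain ⟨hqinj, hqrefl, hqeo, hqeps, hqrel⟩ := hhq
    obtain ⟨hrinj, hrrefl, hreo, hreps, hrrel⟩ := hhr
    have key : ∀ v, ∃ hs : hr v ∈ R.S, hq v = (g.symm ⟨hr v, hs⟩).1 :=
      fun v => inl_eq_iotaQ Q R g (congrFun hkeq v)
    have hmem : ∀ v, hr v ∈ R.S := fun v => (key v).choose
    have heq : ∀ v, hq v = (g.symm ⟨hr v, hmem v⟩).1 := fun v => (key v).choose_spec
    refine ⟨fun v => ⟨hr v, hmem v⟩, fun u => θr u.1, ⟨?_, ?_, ?_, ?_, ?_⟩, ?_, ?_, ?_, ?_⟩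
    · intro x y hxy
      exact hrinj (congrArg Subtype.val hxy)
    · intro x y hxy
      exact hxy.elim
    · intro x y hpar hxy
      exact hreo x y hpar hxy
    · intro u
      constructor
      · intro hex
        obtain ⟨v, hv⟩ := (hreps u.1).mp hex
        exact ⟨v, Subtype.ext hv⟩
      · rintro ⟨v, rfl⟩
        exact (hreps _).mpr ⟨v, rfl⟩
    · intro u u' hlt
      exact hlt.elim
    · funext v
      exact heq v
    · funext q
      by_cases hqT : q ∈ Q.T
      · have h1 := compEps_app (uFinMap_inj Q R g) (fun u => θr u.1) (uFinEps Q) (g ⟨q, hqT⟩)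
        rw [uFinMap_apply_g Q R g hqT] at h1
        rw [h1]
        have e := congrFun hepseq (Sum.inl q)
        erw [compEps_app Sum.inl_injective] at e
        erw [inl_eq_iotaQ_of_T Q R g hqT, compEps_app (iotaQ_inj Q R g)] at e
        exact e
      · rw [compEps_not (not_range_uFinMap Q R g hqT)]
        have e := congrFun hepseq (Sum.inl q)
        erw [compEps_app Sum.inl_injective] at e
        have hnr : ¬ ∃ r, iotaQ Q R g r = (Sum.inl q : (glue Q R g).car) := by
          intro hr'
          exact hqT ((inl_mem_range_iotaQ Q R g).mp hr')
        erw [compEps_not hnr] at e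
        rw [e]
        show fReps Q R g (Sum.inl q) = uFinEps Q q
        unfold fReps uFinEps
        erw [if_neg (show (Sum.inl q : (glue Q R g).car) ∉ Set.range (iotaQ Q R g) from hnr), if_neg hqT]
    · funext v
      rfl
    · funext r'
      by_cases hrS : r' ∈ R.S
      · have h1 := compEps_app (uInMap_inj R) (fun u => θr u.1) (uInEps R) ⟨r', hrS⟩
        rw [show uInMap R (⟨r', hrS⟩ : (interfaceOb R).car) = r' from rfl] at h1
        rw [h1]
      · have h7 : ¬ ∃ u : (interfaceOb R).car, uInMap R u = r' := by
          rintro ⟨u, hu⟩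
          exact hrS (hu ▸ u.2)
        rw [compEps_not h7]
        have e := congrFun hepseq (iotaQ Q R g r')
        erw [compEps_app (iotaQ_inj Q R g)] at e
        have hni : ¬ ∃ a, (Sum.inl a : (glue Q R g).car) = iotaQ Q R g r' := by
          rintro ⟨a, ha⟩
          exact hrS (inl_eq_iotaQ Q R g ha).choose
        erw [compEps_not hni] at e
        rw [← e]
        have e3 : iQeps Q R g (iotaQ Q R g r') = Tri.zero := by
          rw [iotaQ_of_not_mem Q R g hrS]
          rfl
        rw [e3]
        show Tri.zero = uInEps R r'
        unfold uInEps
        rw [if_neg hrS]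

lemma tower_pushout {P : PreIpomset L} (h : DiscTower P) : TowerPushout P := by
  induction h with
  | single P hP hd => exact TowerPushout.single P hd
  | step P Q f hP hd hf hQ ih =>
      exact TowerPushout.step P Q f hd (trackGlue P Q f hP hd (tower_isIpomset hQ) hf) ih

end TrackAux
/-- If `P = P₁ * P₂ * ⋯ * P_m` is the (minimal) discrete
decomposition of an interval ipomset `P`, then the track object `□^P` equals
the iterated gluing `□^{P₁} * ⋯ * □^{P_m}` of the standard cubes of the
discrete pieces: every gluing stage of the decomposition yields a pushout of
the corresponding track objects. -/
theorem track_of_minimal_decomposition {L : Type} (P : PreIpomset L)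
    (hP : IsIpomset P) (hPi : IsInterval P)
    (h : DiscTower P) : TowerPushout P := by
  exact TrackAux.tower_pushout h
end
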